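/- Let H be a modular hyperplane of a matroid M, let X ⊆ E(M)−H, and let P be the union of the projections P_H(x,y) over all pairs of distinct rank-one flats x, y spanned by elements of X. If U ⊆ H contains P, then cl(U) = cl(U ∪ X) ∩ H. -/

import Mathlib

open Set

namespace Matroid

variable {α : Type*} {β : Type*}

/-- The rank of a set in a matroid: the supremum of sizes of independent subsets. -/
noncomputable def mRank (M : Matroid α) (X : Set α) : ℕ :=
  sSup {n : ℕ | ∃ I, M.Indep I ∧ I ⊆ X ∧ I.ncard = n}

/-- The rank of a matroid. -/
noncomputable def mRk (M : Matroid α) : ℕ := M.mRank M.E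

/-- A flat `F` is modular if `r F + r F' = r (F ∪ F') + r (F ∩ F')` for every flat `F'`. -/
def IsModularFlat (M : Matroid α) (F : Set α) : Prop :=
  M.IsFlat F ∧ ∀ F', M.IsFlat F' →
    M.mRank F + M.mRank F' = M.mRank (F ∪ F') + M.mRank (F ∩ F')

/-- A proper flat is a flat other than the ground set. -/
def IsProperFlat (M : Matroid α) (F : Set α) : Prop := M.IsFlat F ∧ F ≠ M.E

/-- A vertical cover is a pair of proper flats whose union is the ground set. -/
def VerticalCover (M : Matroid α) (F F' : Set α) : Prop :=
  M.IsProperFlat F ∧ M.IsProperFlat F' ∧ F ∪ F' = M.E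

/-- A modular cover is a vertical cover by two modular flats. -/
def ModularCover (M : Matroid α) (F F' : Set α) : Prop :=
  M.VerticalCover F F' ∧ M.IsModularFlat F ∧ M.IsModularFlat F'

/-- A matroid is round if it has no vertical cover. -/
def Round (M : Matroid α) : Prop := ∀ F F', ¬ M.VerticalCover F F'

/-- A subset of the ground set is round if the restriction to it is round. -/
def RoundSet (M : Matroid α) (X : Set α) : Prop := X ⊆ M.E ∧ (M ↾ X).Round

/-- A rotunda is a maximal round flat. -/
def Rotunda (M : Matroid α) (R : Set α) : Prop :=
  M.IsFlat R ∧ M.RoundSet R ∧ ∀ R', M.IsFlat R' → M.RoundSet R' → R ⊆ R' → R' = R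

/-- A matroid of rank `r` is supersolvable if there is a chain of modular flats
`F 0 ⊆ F 1 ⊆ ⋯ ⊆ F r` with `r (F i) = i` for each `i`. -/
def Supersolvable (M : Matroid α) : Prop :=
  ∃ F : ℕ → Set α, (∀ i ≤ M.mRk, M.IsModularFlat (F i) ∧ M.mRank (F i) = i) ∧
    ∀ i < M.mRk, F i ⊆ F (i + 1)

/-- A matroid is saturated if every round flat is modular. -/
def Saturated (M : Matroid α) : Prop :=
  ∀ F, M.IsFlat F → M.RoundSet F → M.IsModularFlat F

/-- A circuit: a minimal dependent subset of the ground set. -/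
def Circ (M : Matroid α) (C : Set α) : Prop :=
  C ⊆ M.E ∧ ¬ M.Indep C ∧ ∀ D ⊂ C, M.Indep D

/-- A matroid is connected if it is non-empty and every two distinct elements lie in a
common circuit. -/
def ConnectedM (M : Matroid α) : Prop :=
  M.E.Nonempty ∧ ∀ x ∈ M.E, ∀ y ∈ M.E, x = y ∨ ∃ C, M.Circ C ∧ x ∈ C ∧ y ∈ C

/-- A hyperplane: a flat of rank `r M - 1`. -/
def IsHyperplane (M : Matroid α) (H : Set α) : Prop :=
  M.IsFlat H ∧ M.mRank H + 1 = M.mRk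

/-- The union of the projections `P_H(x, y) = H ∩ cl (x ∪ y)` onto the modular hyperplane `H`,
taken over all pairs of distinct rank-one flats `x = cl {a}`, `y = cl {b}` spanned by
elements `a, b` of `X`. -/
def projUnion (M : Matroid α) (H X : Set α) : Set α :=
  ⋃ a ∈ X, ⋃ b ∈ X, ⋃ (_ : M.closure {a} ≠ M.closure {b}), H ∩ M.closure {a, b}

/-- Two elements are related if they are equal or lie in a common circuit; the connected
components of a matroid are the restrictions to the equivalence classes of this relation. -/
def connRel (M : Matroid α) (x y : α) : Prop :=
  x = y ∨ ∃ C, M.Circ C ∧ x ∈ C ∧ y ∈ C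

/-- The rotunda graph of a matroid: vertices are the rotunda; two rotunda are adjacent if
they intersect and there is a modular cover separating them at their intersection. -/
def rotundaGraph (M : Matroid α) : SimpleGraph {R : Set α // M.Rotunda R} where
  Adj R₁ R₂ := R₁ ≠ R₂ ∧ (R₁.1 ∩ R₂.1).Nonempty ∧
    ∃ F₁ F₂, M.ModularCover F₁ F₂ ∧ R₁.1 ⊆ F₁ ∧ R₂.1 ⊆ F₂ ∧ F₁ ∩ F₂ = R₁.1 ∩ R₂.1
  symm := ⟨by
    rintro a b ⟨hne, hint, F₁, F₂, ⟨⟨hp1, hp2, hu⟩, hm1, hm2⟩, h1, h2, hi⟩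
    refine ⟨hne.symm, by rwa [Set.inter_comm], F₂, F₁,
      ⟨⟨hp2, hp1, by rwa [Set.union_comm]⟩, hm2, hm1⟩, h2, h1, ?_⟩
    rw [Set.inter_comm, hi, Set.inter_comm]⟩
  loopless := ⟨fun a h => h.1 rfl⟩

/-- A rotunda tree of `M`: a tree on the rotunda of `M` such that for each element `x` of the
ground set, the rotunda containing `x` induce a (nonempty) subtree. -/
def IsRotundaTree (M : Matroid α) (T : SimpleGraph {R : Set α // M.Rotunda R}) : Prop :=
  T.IsTree ∧ ∀ x ∈ M.E, (T.induce {t : {R : Set α // M.Rotunda R} | x ∈ t.1}).Connected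

/-- A legitimate weighting of `M`: zero on the empty set, and strictly monotone under proper
inclusion on the set consisting of `∅` and the pairwise intersections of distinct rotunda. -/
def LegitimateWeighting (M : Matroid α) (σ : Set α → ℕ) : Prop :=
  σ ∅ = 0 ∧
  ∀ X X' : Set α,
    (X = ∅ ∨ ∃ R R', M.Rotunda R ∧ M.Rotunda R' ∧ R ≠ R' ∧ X = R ∩ R') →
    (X' = ∅ ∨ ∃ R R', M.Rotunda R ∧ M.Rotunda R' ∧ R ≠ R' ∧ X' = R ∩ R') →
    X ⊂ X' → σ X < σ X'

/-- The total weight of a graph on the rotunda of `M`, where the edge joining rotunda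
`R` and `R'` gets weight `σ (R ∩ R')`. -/
noncomputable def treeWeight {M : Matroid α} (σ : Set α → ℕ)
    (T : SimpleGraph {R : Set α // M.Rotunda R}) : ℕ :=
  ∑ᶠ e ∈ T.edgeSet,
    Sym2.lift ⟨fun a b => σ (a.1 ∩ b.1), fun a b => by simp [Set.inter_comm]⟩ e

/-- A tree-decomposition of a matroid: a tree together with bags covering the ground set. -/
def IsTreeDecomp (M : Matroid α) (T : SimpleGraph β) (τ : β → Set α) : Prop :=
  T.IsTree ∧ ∀ x ∈ M.E, ∃ t, x ∈ τ t

/-- The node-width of a node `t` in a tree-decomposition `(T, τ)` of `M`: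
`(Σ_i r (τ t ∪ ⋃_{k ≠ i} F_k)) − (d − 1) · r M`, where `F_1, …, F_d` are the unions of the
bags over the connected components of `T − t`. -/
noncomputable def nodeWidth (M : Matroid α) (T : SimpleGraph β) (τ : β → Set α) (t : β) : ℤ :=
  (∑ᶠ c : (T.induce {s : β | s ≠ t}).ConnectedComponent,
      (M.mRank (τ t ∪ ⋃ (s : {s : β // s ≠ t})
        (_ : (T.induce {s : β | s ≠ t}).connectedComponentMk s ≠ c), τ s.1) : ℤ))
    - ((Nat.card (T.induce {s : β | s ≠ t}).ConnectedComponent : ℤ) - 1) * (M.mRk : ℤ)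

/-- The width of a tree-decomposition: the maximum node-width. -/
noncomputable def decompWidth (M : Matroid α) (T : SimpleGraph β) (τ : β → Set α) : ℤ :=
  sSup (Set.range (M.nodeWidth T τ))

/-- The tree-width of a matroid: the minimum width of a (finite) tree-decomposition. -/
noncomputable def treeWidth (M : Matroid α) : ℕ :=
  sInf {n : ℕ | ∃ (β : Type) (T : SimpleGraph β) (τ : β → Set α),
    Finite β ∧ M.IsTreeDecomp T τ ∧ ∀ t, M.nodeWidth T τ t ≤ (n : ℤ)}

end Matroid

namespace SimpleGraph

/-- A graph is chordal if every cycle with at least four edges has a chord: an edge of the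
graph joining two vertices of the cycle that is not an edge of the cycle. -/
def IsChordal {V : Type*} (G : SimpleGraph V) : Prop :=
  ∀ ⦃v : V⦄ (w : G.Walk v v), w.IsCycle → 4 ≤ w.length →
    ∃ x y, x ∈ w.support ∧ y ∈ w.support ∧ G.Adj x y ∧ s(x, y) ∉ w.edges

/-- A maximal clique of a graph. -/
def MaxClique {V : Type*} (G : SimpleGraph V) (C : Set V) : Prop :=
  G.IsClique C ∧ ∀ D, G.IsClique D → C ⊆ D → D = C

/-- The reduced clique graph of a graph: vertices are the maximal cliques; two maximal
cliques are adjacent if they intersect and every walk from one side to the other passes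
through their intersection. -/
def reducedCliqueGraph {V : Type*} (G : SimpleGraph V) :
    SimpleGraph {C : Set V // G.MaxClique C} where
  Adj C₁ C₂ := C₁ ≠ C₂ ∧ (C₁.1 ∩ C₂.1).Nonempty ∧
    ∀ u ∈ C₁.1 \ C₂.1, ∀ v ∈ C₂.1 \ C₁.1, ∀ p : G.Walk u v,
      ∃ z ∈ p.support, z ∈ C₁.1 ∩ C₂.1
  symm := ⟨by
    rintro a b ⟨hne, hint, hsep⟩
    refine ⟨hne.symm, by rwa [Set.inter_comm], fun u hu v hv p => ?_⟩
    obtain ⟨z, hz, hz2⟩ := hsep v hv u hu p.reverse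
    refine ⟨z, ?_, by rwa [Set.inter_comm]⟩
    simpa [SimpleGraph.Walk.support_reverse] using hz⟩
  loopless := ⟨fun a h => h.1 rfl⟩

end SimpleGraph

open Matroid

section Aux

variable {α : Type*} {M : Matroid α} {X Y I : Set α}

private lemma mRankSet_nonempty (M : Matroid α) (X : Set α) :
    {n : ℕ | ∃ I, M.Indep I ∧ I ⊆ X ∧ I.ncard = n}.Nonempty :=
  ⟨0, ∅, M.empty_indep, empty_subset _, by simp⟩

private lemma mRankSet_bddAbove (M : Matroid α) [M.Finite] (X : Set α) :
    BddAbove {n : ℕ | ∃ I, M.Indep I ∧ I ⊆ X ∧ I.ncard = n} := by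
  refine ⟨M.E.ncard, ?_⟩
  rintro n ⟨I, hI, -, rfl⟩
  exact Set.ncard_le_ncard hI.subset_ground M.ground_finite

private lemma mRank_mono (M : Matroid α) [M.Finite] (h : X ⊆ Y) : M.mRank X ≤ M.mRank Y := by
  refine csSup_le_csSup (mRankSet_bddAbove M Y) (mRankSet_nonempty M X) ?_
  rintro n ⟨I, hI, hIX, rfl⟩
  exact ⟨I, hI, hIX.trans h, rfl⟩

private lemma Matroid.IsBasis.mRank_eq_ncard [M.Finite] (h : M.IsBasis I X) :
    M.mRank X = I.ncard := by
  refine le_antisymm (csSup_le (mRankSet_nonempty M X) ?_)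
    (le_csSup (mRankSet_bddAbove M X) ⟨I, h.indep, h.subset, rfl⟩)
  rintro n ⟨J, hJ, hJX, rfl⟩
  obtain ⟨J', hJ', hJJ'⟩ := hJ.subset_isBasis_of_subset hJX h.subset_ground
  have h1 : J.encard ≤ I.encard := (Set.encard_le_encard hJJ').trans_eq (hJ'.encard_eq_encard h)
  have hfin : I.Finite := M.set_finite I h.indep.subset_ground
  rw [Set.ncard_def, Set.ncard_def]
  exact ENat.toNat_le_toNat h1 hfin.encard_lt_top.ne

private lemma flat_closure (M : Matroid α) (X : Set α) : M.IsFlat (M.closure X) := by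
  have hne : Nonempty {F // M.IsFlat F ∧ X ∩ M.E ⊆ F} := ⟨⟨M.E, M.ground_isFlat, inter_subset_right⟩⟩
  have h := Matroid.IsFlat.iInter (M := M)
    (Fs := fun F : {F // M.IsFlat F ∧ X ∩ M.E ⊆ F} => F.1) fun F => F.2.1
  rwa [closure_def, sInter_eq_iInter]

private lemma indep_singleton_of_not_mem_flat {a : α} {F : Set α} (hF : M.IsFlat F)
    (haE : a ∈ M.E) (haF : a ∉ F) : M.Indep {a} := by
  have : M.Indep (insert a ∅) := by
    rw [M.empty_indep.insert_indep_iff_of_notMem (notMem_empty a)]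
    exact ⟨haE, fun h => haF ((M.closure_subset_closure (empty_subset F)).trans
      hF.closure.subset h)⟩
  simpa using this

private lemma not_mem_closure_empty_of_indep {a : α} (ha : M.Indep {a}) :
    a ∉ M.closure ∅ := by
  intro h
  have := (M.empty_indep.insert_dep_iff).2 ⟨h, notMem_empty a⟩
  simp only [insert_empty_eq] at this
  exact this.not_indep ha

/-- The key rank computation: given a modular hyperplane `H` and two elements `a, b`
outside `H` spanning distinct points, `H ∩ cl {a, b}` contains a nonloop. -/
private lemma exists_point_in_proj [M.Finite] {H : Set α} {a b : α}
    (hH : M.IsHyperplane H) (hmod : M.IsModularFlat H)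
    (ha : a ∈ M.E \ H) (hb : b ∈ M.E \ H) (hne : M.closure {a} ≠ M.closure {b}) :
    ∃ p, M.Indep {p} ∧ p ∈ H ∩ M.closure {a, b} := by
  have hHE : H ⊆ M.E := hH.1.subset_ground
  have hia : M.Indep {a} := indep_singleton_of_not_mem_flat hH.1 ha.1 ha.2
  have hib : M.Indep {b} := indep_singleton_of_not_mem_flat hH.1 hb.1 hb.2
  -- b ∉ cl {a}
  have hbcla : b ∉ M.closure {a} := by
    intro hmem
    have h1 : a ∈ M.closure {b} := by
      have := Matroid.mem_closure_insert (not_mem_closure_empty_of_indep hib)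
        (by simpa using hmem)
      simpa using this
    refine hne (le_antisymm ?_ ?_)
    · exact (M.closure_subset_closure_of_subset_closure (by simpa using h1))
    · exact (M.closure_subset_closure_of_subset_closure (by simpa using hmem))
  have hab : a ≠ b := fun h => hbcla (h ▸ M.mem_closure_self a ha.1)
  -- {a, b} is independent
  have hiab : M.Indep {a, b} := by
    rw [show ({a, b} : Set α) = insert b {a} from Set.pair_comm a b]
    rw [hia.insert_indep_iff_of_notMem (by simp [Ne.symm hab])]
    exact ⟨hb.1, hbcla⟩
  -- rank computations
  have hbasis : M.IsBasis {a, b} (M.closure {a, b}) := hiab.isBasis_closure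
  have hr2 : M.mRank (M.closure {a, b}) = 2 := by
    rw [hbasis.mRank_eq_ncard, Set.ncard_pair hab]
  -- mRank (H ∪ cl {a,b}) = mRank E
  obtain ⟨I, hI⟩ := M.exists_isBasis H hHE
  have hclI : M.closure I = H := by rw [hI.closure_eq_closure, hH.1.closure]
  have haI : a ∉ I := fun h => ha.2 (hI.subset h)
  have hIfin : I.Finite := M.set_finite I hI.indep.subset_ground
  have haiI : M.Indep (insert a I) := by
    rw [hI.indep.insert_indep_iff_of_notMem haI, hclI]
    exact ha
  have hins : M.mRank H + 1 ≤ M.mRank (insert a H) := by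
    rw [hI.mRank_eq_ncard]
    refine le_csSup (mRankSet_bddAbove M _) ⟨insert a I, haiI, insert_subset_insert hI.subset, ?_⟩
    rw [Set.ncard_insert_of_notMem haI hIfin]
  have hrU : M.mRank (H ∪ M.closure {a, b}) = M.mRank M.E := by
    refine le_antisymm (mRank_mono M (union_subset hHE (M.closure_subset_ground _))) ?_
    rw [show M.mRank M.E = M.mRk from rfl, ← hH.2]
    refine hins.trans (mRank_mono M ?_)
    exact insert_subset (Or.inr (M.mem_closure_of_mem (by simp) (by
      simp [Set.insert_subset_iff, ha.1, hb.1]))) subset_union_left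
  -- modularity gives mRank (H ∩ cl {a,b}) = 1
  have heq := hmod.2 (M.closure {a, b}) (flat_closure M _)
  have hrk : M.mRank H + 1 = M.mRank M.E := hH.2
  have h1 : M.mRank (H ∩ M.closure {a, b}) = 1 := by
    rw [hr2, hrU] at heq; omega
  -- extract a nonloop
  have hmem := Nat.sSup_mem (mRankSet_nonempty M (H ∩ M.closure {a, b}))
    (mRankSet_bddAbove M (H ∩ M.closure {a, b}))
  rw [show sSup {n : ℕ | ∃ I, M.Indep I ∧ I ⊆ H ∩ M.closure {a, b} ∧ I.ncard = n}
      = M.mRank (H ∩ M.closure {a, b}) from rfl, h1] at hmem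
  obtain ⟨J, hJ, hJsub, hJcard⟩ := hmem
  obtain ⟨p, rfl⟩ := Set.ncard_eq_one.1 hJcard
  exact ⟨p, hJ, hJsub rfl⟩

end Aux

/-- Let `H` be a modular hyperplane, `X ⊆ E(M) − H`, and `P` the union of the projections
`P_H(x, y)` over all pairs of distinct rank-one flats spanned by elements of `X`. If
`P ⊆ U ⊆ H`, then `cl U = cl (U ∪ X) ∩ H`. -/
theorem closure_eq_closure_union_inter_hyperplane {α : Type*} (M : Matroid α) [M.Finite]
    (H X U : Set α) (hH : M.IsHyperplane H) (hmod : M.IsModularFlat H)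
    (hX : X ⊆ M.E \ H) (hU : U ⊆ H) (hP : M.projUnion H X ⊆ U) :
    M.closure U = M.closure (U ∪ X) ∩ H := by
  have hHE : H ⊆ M.E := hH.1.subset_ground
  have hUE : U ⊆ M.E := hU.trans hHE
  have hclUH : M.closure U ⊆ H := (M.closure_subset_closure hU).trans hH.1.closure.subset
  refine le_antisymm (subset_inter (M.closure_subset_closure subset_union_left) hclUH) ?_
  obtain (rfl | ⟨a, haX⟩) := X.eq_empty_or_nonempty
  · rw [union_empty]; exact inter_subset_left
  have ha : a ∈ M.E \ H := hX haX
  -- Claim: X ⊆ cl (insert a U)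
  have hclaim : X ⊆ M.closure (insert a U) := by
    intro b hbX
    have hb : b ∈ M.E \ H := hX hbX
    by_cases hcl : M.closure {a} = M.closure {b}
    · have : b ∈ M.closure {a} := hcl ▸ M.mem_closure_self b hb.1
      exact M.closure_subset_closure (singleton_subset_iff.2 (mem_insert a U)) this
    · obtain ⟨p, hp, hpH, hpcl⟩ := exists_point_in_proj hH hmod ha hb hcl
      have hpU : p ∈ U := by
        refine hP ?_
        simp only [projUnion, mem_iUnion]
        exact ⟨a, haX, b, hbX, hcl, hpH, hpcl⟩
      -- p ∉ cl {a}
      have hpa : p ∉ M.closure {a} := by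
        intro hmem
        have : a ∈ M.closure {p} := by
          have := Matroid.mem_closure_insert (not_mem_closure_empty_of_indep hp)
            (by simpa using hmem)
          simpa using this
        exact ha.2 ((M.closure_subset_closure (singleton_subset_iff.2 hpH)).trans
          hH.1.closure.subset this)
      -- exchange: b ∈ cl {a, p}
      have hpab : p ∈ M.closure (insert b {a}) := by
        rwa [show (insert b {a} : Set α) = {a, b} from (Set.pair_comm a b).symm]
      have hbap : b ∈ M.closure (insert p {a}) :=
        Matroid.mem_closure_insert hpa hpab
      refine M.closure_subset_closure ?_ hbap
      exact insert_subset (Or.inr hpU) (singleton_subset_iff.2 (mem_insert a U))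
  -- cl (U ∪ X) = cl (insert a U)
  have hequ : M.closure (U ∪ X) = M.closure (insert a U) := by
    refine le_antisymm (M.closure_subset_closure_of_subset_closure ?_)
      (M.closure_subset_closure (insert_subset (Or.inr haX) subset_union_left))
    exact union_subset ((M.subset_closure_of_subset (subset_insert a U)
      (insert_subset ha.1 hUE))) hclaim
  rw [hequ]
  -- cl (insert a U) ∩ H ⊆ cl U
  rintro z ⟨hz, hzH⟩
  by_contra hzU
  have haU : a ∈ M.closure (insert z U) := Matroid.mem_closure_insert hzU hz
  exact ha.2 ((M.closure_subset_closure (insert_subset hzH hU)).trans hH.1.closure.subset haU)
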